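/- Let R be a biinvertible solution of the quantum Yang–Baxter equation. Define the n-fold iterated algebra B(R) ⋊ B(R) ⋊ ⋯ ⋊ B(R) with generators u⁽¹⁾, …, u⁽ⁿ⁾ (each an n×n matrix of generators) and relations R₂₁ u₁⁽ⁱ⁾ R u₂⁽ʲ⁾ = u₂⁽ʲ⁾ R₂₁ u₁⁽ⁱ⁾ R for all i ≥ j. Then the assignment Δ(u⁽ⁱ⁾) = u⁽ⁱ⁾ ⊗ u⁽ⁱ⁾ (matrix coproduct Δ(u⁽ⁱ⁾ᵃᵦ) = Σ_c u⁽ⁱ⁾ᵃ_c ⊗ u⁽ⁱ⁾ᶜᵦ), extended to the braided tensor product of two copies of this algebra with cross relations R⁻¹ v₁⁽ⁱ⁾ R u₂⁽ʲ⁾ = u₂⁽ʲ⁾ R⁻¹ v₁⁽ⁱ⁾ R for all i, j (v denoting generators of the second tensor factor), defines an algebra homomorphism, making the chain a braided bialgebra. -/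

import Mathlib

open scoped Matrix

variable {k : Type*} [Field k] {n : ℕ}

/-- `u ⊗ I` (leg 1) of an `n × n` matrix with entries in an algebra. -/
def leg1 {A : Type*} [Ring A] (u : Matrix (Fin n) (Fin n) A) :
    Matrix (Fin n × Fin n) (Fin n × Fin n) A :=
  fun p q => if p.2 = q.2 then u p.1 q.1 else 0

/-- `I ⊗ u` (leg 2) of an `n × n` matrix with entries in an algebra. -/
def leg2 {A : Type*} [Ring A] (u : Matrix (Fin n) (Fin n) A) :
    Matrix (Fin n × Fin n) (Fin n × Fin n) A :=
  fun p q => if p.1 = q.1 then u p.2 q.2 else 0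

/-- `R₂₁ = τ(R)`. -/
def flip21 (R : Matrix (Fin n × Fin n) (Fin n × Fin n) k) :
    Matrix (Fin n × Fin n) (Fin n × Fin n) k :=
  fun p q => R (p.2, p.1) (q.2, q.1)

/-- Base change of a scalar matrix into an algebra. -/
def mapA (A : Type*) [Ring A] [Algebra k A]
    (R : Matrix (Fin n × Fin n) (Fin n × Fin n) k) :
    Matrix (Fin n × Fin n) (Fin n × Fin n) A :=
  R.map (algebraMap k A)

/-- `R₁₂` acting on the triple tensor product. -/
def L12 (R : Matrix (Fin n × Fin n) (Fin n × Fin n) k) :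
    Matrix (Fin n × Fin n × Fin n) (Fin n × Fin n × Fin n) k :=
  fun p q => if p.2.2 = q.2.2 then R (p.1, p.2.1) (q.1, q.2.1) else 0

/-- `R₁₃` acting on the triple tensor product. -/
def L13 (R : Matrix (Fin n × Fin n) (Fin n × Fin n) k) :
    Matrix (Fin n × Fin n × Fin n) (Fin n × Fin n × Fin n) k :=
  fun p q => if p.2.1 = q.2.1 then R (p.1, p.2.2) (q.1, q.2.2) else 0

/-- `R₂₃` acting on the triple tensor product. -/
def L23 (R : Matrix (Fin n × Fin n) (Fin n × Fin n) k) :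
    Matrix (Fin n × Fin n × Fin n) (Fin n × Fin n × Fin n) k :=
  fun p q => if p.1 = q.1 then R (p.2.1, p.2.2) (q.2.1, q.2.2) else 0

/-- The quantum Yang–Baxter equation `R₁₂ R₁₃ R₂₃ = R₂₃ R₁₃ R₁₂`. -/
def QYBE (R : Matrix (Fin n × Fin n) (Fin n × Fin n) k) : Prop :=
  L12 R * L13 R * L23 R = L23 R * L13 R * L12 R

/-- Biinvertibility: `R` is invertible and has a second inverse `R̃` with
`R̃ᵃᵢᵇⱼ Rʲᵇₖᶜ = δᵃₖ δᶜᵢ`. -/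
def Biinvertible (R : Matrix (Fin n × Fin n) (Fin n × Fin n) k) : Prop :=
  (∃ Ri, R * Ri = 1 ∧ Ri * R = 1) ∧
  (∃ Rt : Matrix (Fin n × Fin n) (Fin n × Fin n) k, ∀ a i c kk : Fin n,
    (∑ b : Fin n, ∑ j : Fin n, Rt (a, i) (b, j) * R (j, b) (kk, c))
      = if a = kk ∧ c = i then 1 else 0)

/-- The reflection-equation (braided matrix) relation
`R₂₁ u₁ R v₂ = v₂ R₂₁ u₁ R` for matrices `u, v` with entries in a `k`-algebra `A`. -/
def ReflRel {A : Type*} [Ring A] [Algebra k A]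
    (R : Matrix (Fin n × Fin n) (Fin n × Fin n) k)
    (u v : Matrix (Fin n) (Fin n) A) : Prop :=
  mapA A (flip21 R) * leg1 u * mapA A R * leg2 v
    = leg2 v * mapA A (flip21 R) * leg1 u * mapA A R

/-- The braided tensor product (cross) relation `R⁻¹ v₁ R u₂ = u₂ R⁻¹ v₁ R`,
where `Ri` is the inverse of `R`. -/
def CrossRel {A : Type*} [Ring A] [Algebra k A]
    (Ri R : Matrix (Fin n × Fin n) (Fin n × Fin n) k)
    (v u : Matrix (Fin n) (Fin n) A) : Prop :=
  mapA A Ri * leg1 v * mapA A R * leg2 u = leg2 u * mapA A Ri * leg1 v * mapA A R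


section BraidedAux

variable {k : Type*} [Field k] {n : ℕ}

/-- Conjugation by the tensor flip, on matrices over any ring. -/
def flipM {B : Type*} [Ring B] (M : Matrix (Fin n × Fin n) (Fin n × Fin n) B) :
    Matrix (Fin n × Fin n) (Fin n × Fin n) B :=
  fun p q => M (p.2, p.1) (q.2, q.1)

lemma flipM_mul {B : Type*} [Ring B] (M N : Matrix (Fin n × Fin n) (Fin n × Fin n) B) :
    flipM (M * N) = flipM M * flipM N := by
  ext p q
  simp only [flipM, Matrix.mul_apply]
  exact (Fintype.sum_equiv (Equiv.prodComm _ _) _ _ (fun r => rfl)).symm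

lemma flipM_one {B : Type*} [Ring B] :
    flipM (1 : Matrix (Fin n × Fin n) (Fin n × Fin n) B) = 1 := by
  ext p q
  simp [flipM, Matrix.one_apply, Prod.ext_iff, and_comm]

lemma flipM_leg1 {A : Type*} [Ring A] (u : Matrix (Fin n) (Fin n) A) :
    flipM (leg1 u) = leg2 u := rfl

lemma flipM_leg2 {A : Type*} [Ring A] (u : Matrix (Fin n) (Fin n) A) :
    flipM (leg2 u) = leg1 u := rfl

lemma flipM_mapA {A : Type*} [Ring A] [Algebra k A]
    (R : Matrix (Fin n × Fin n) (Fin n × Fin n) k) :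
    flipM (mapA A R) = mapA A (flip21 R) := rfl

lemma mapA_mul {A : Type*} [Ring A] [Algebra k A]
    (M N : Matrix (Fin n × Fin n) (Fin n × Fin n) k) :
    mapA A (M * N) = mapA A M * mapA A N :=
  Matrix.map_mul

lemma mapA_one {A : Type*} [Ring A] [Algebra k A] :
    mapA A (1 : Matrix (Fin n × Fin n) (Fin n × Fin n) k) = 1 :=
  Matrix.map_one _ (map_zero _) (map_one _)

lemma leg1_mul {A : Type*} [Ring A] (u v : Matrix (Fin n) (Fin n) A) :
    leg1 (u * v) = leg1 u * leg1 v := by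
  ext p q
  simp only [leg1, Matrix.mul_apply, Fintype.sum_prod_type]
  by_cases h : p.2 = q.2 <;> simp [h, Finset.sum_comm]

lemma leg2_mul {A : Type*} [Ring A] (u v : Matrix (Fin n) (Fin n) A) :
    leg2 (u * v) = leg2 u * leg2 v := by
  ext p q
  simp only [leg2, Matrix.mul_apply, Fintype.sum_prod_type]
  by_cases h : p.1 = q.1 <;> simp [h]

end BraidedAux

/- Statement 8: the braided spin chain B(R) ⋊ ⋯ ⋊ B(R). If the families u⁽ⁱ⁾ and v⁽ⁱ⁾ each
satisfy the chain relations R₂₁ u₁⁽ⁱ⁾ R u₂⁽ʲ⁾ = u₂⁽ʲ⁾ R₂₁ u₁⁽ⁱ⁾ R for all i ≥ j, and the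
braided tensor product cross relations R⁻¹ v₁⁽ⁱ⁾ R u₂⁽ʲ⁾ = u₂⁽ʲ⁾ R⁻¹ v₁⁽ⁱ⁾ R hold for all
i, j, then the matrices w⁽ⁱ⁾ = u⁽ⁱ⁾ v⁽ⁱ⁾ (i.e. Δ(u⁽ⁱ⁾) = u⁽ⁱ⁾ ⊗ u⁽ⁱ⁾) again satisfy the
chain relations, so Δ defines an algebra homomorphism into the braided tensor product. -/

theorem braided_spin_chain_comul_well_defined
    (R : Matrix (Fin n × Fin n) (Fin n × Fin n) k)
    (hYB : QYBE R) (hbi : Biinvertible R)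
    (Ri : Matrix (Fin n × Fin n) (Fin n × Fin n) k)
    (hRi : R * Ri = 1 ∧ Ri * R = 1)
    (A : Type*) [Ring A] [Algebra k A]
    (N : ℕ) (u v : Fin N → Matrix (Fin n) (Fin n) A)
    (hu : ∀ i j, j ≤ i → ReflRel R (u i) (u j))
    (hv : ∀ i j, j ≤ i → ReflRel R (v i) (v j))
    (hcross : ∀ i j, CrossRel Ri R (v i) (u j)) :
    ∀ i j, j ≤ i → ReflRel R (u i * v i) (u j * v j) := by
  intro i j hij
  -- notation
  set S : Matrix (Fin n × Fin n) (Fin n × Fin n) A := mapA A R with hS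
  set Si : Matrix (Fin n × Fin n) (Fin n × Fin n) A := mapA A Ri with hSi
  set T : Matrix (Fin n × Fin n) (Fin n × Fin n) A := mapA A (flip21 R) with hT
  set Ti : Matrix (Fin n × Fin n) (Fin n × Fin n) A := mapA A (flip21 Ri) with hTi
  have hSSi : S * Si = 1 := by rw [hS, hSi, ← mapA_mul, hRi.1, mapA_one]
  have hSiS : Si * S = 1 := by rw [hS, hSi, ← mapA_mul, hRi.2, mapA_one]
  have hTTi : T * Ti = 1 := by
    rw [hT, hTi, ← flipM_mapA, ← flipM_mapA, ← flipM_mul, ← mapA_mul, hRi.1,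
      mapA_one, flipM_one]
  have hTiT : Ti * T = 1 := by
    rw [hT, hTi, ← flipM_mapA, ← flipM_mapA, ← flipM_mul, ← mapA_mul, hRi.2,
      mapA_one, flipM_one]
  -- cancellation lemmas (right-associated)
  have cS : ∀ Y : Matrix (Fin n × Fin n) (Fin n × Fin n) A, S * (Si * Y) = Y := by
    intro Y; rw [← mul_assoc, hSSi, one_mul]
  have cT : ∀ Y : Matrix (Fin n × Fin n) (Fin n × Fin n) A, T * (Ti * Y) = Y := by
    intro Y; rw [← mul_assoc, hTTi, one_mul]
  have cTi : ∀ Y : Matrix (Fin n × Fin n) (Fin n × Fin n) A, Ti * (T * Y) = Y := by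
    intro Y; rw [← mul_assoc, hTiT, one_mul]
  set U1 := leg1 (u i)
  set V1 := leg1 (v i)
  set U2 := leg2 (u j)
  set V2 := leg2 (v j)
  -- the given relations
  have hu' : T * U1 * S * U2 = U2 * (T * U1 * S) := by
    have := hu i j hij
    unfold ReflRel at this
    rw [this]; noncomm_ring
  have hv' : T * V1 * S * V2 = V2 * (T * V1 * S) := by
    have := hv i j hij
    unfold ReflRel at this
    rw [this]; noncomm_ring
  have hc1 : Si * V1 * S * U2 = U2 * (Si * V1 * S) := by
    have := hcross i j
    unfold CrossRel at this
    rw [this]; noncomm_ring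
  -- flipped cross relation: Ti * V2 * T * U1 = U1 * (Ti * V2 * T)
  have hc2 : Ti * V2 * T * U1 = U1 * (Ti * V2 * T) := by
    have h := hcross j i
    unfold CrossRel at h
    have h2 := congrArg flipM h
    simp only [flipM_mul, flipM_mapA, flipM_leg1, flipM_leg2] at h2
    calc Ti * V2 * T * U1 = U1 * Ti * V2 * T := h2
      _ = U1 * (Ti * V2 * T) := by noncomm_ring
  -- right-associated moving lemmas
  have h1 : ∀ X : Matrix (Fin n × Fin n) (Fin n × Fin n) A,
      V1 * (S * (U2 * X)) = S * (U2 * (Si * (V1 * (S * X)))) := by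
    intro X
    have h := congrArg (· * X) hc1
    simp only [mul_assoc] at h
    calc V1 * (S * (U2 * X)) = S * (Si * (V1 * (S * (U2 * X)))) := (cS _).symm
      _ = S * (U2 * (Si * (V1 * (S * X)))) := by rw [h]
  have h2 : ∀ X : Matrix (Fin n × Fin n) (Fin n × Fin n) A,
      T * (U1 * (S * (U2 * X))) = U2 * (T * (U1 * (S * X))) := by
    intro X
    have h := congrArg (· * X) hu'
    simp only [mul_assoc] at h
    exact h
  have h3 : ∀ X : Matrix (Fin n × Fin n) (Fin n × Fin n) A,
      V1 * (S * (V2 * X)) = Ti * (V2 * (T * (V1 * (S * X)))) := by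
    intro X
    have h := congrArg (· * X) hv'
    simp only [mul_assoc] at h
    calc V1 * (S * (V2 * X)) = Ti * (T * (V1 * (S * (V2 * X)))) := (cTi _).symm
      _ = Ti * (V2 * (T * (V1 * (S * X)))) := by rw [h]
  have h4 : ∀ X : Matrix (Fin n × Fin n) (Fin n × Fin n) A,
      T * (U1 * (Ti * (V2 * (T * X)))) = V2 * (T * (U1 * X)) := by
    intro X
    have h := congrArg (· * X) hc2
    simp only [mul_assoc] at h
    calc T * (U1 * (Ti * (V2 * (T * X)))) = T * (Ti * (V2 * (T * (U1 * X)))) := by rw [← h]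
      _ = V2 * (T * (U1 * X)) := cT _
  -- the main chain
  have key : ∀ X : Matrix (Fin n × Fin n) (Fin n × Fin n) A,
      T * (U1 * (V1 * (S * (U2 * (V2 * X))))) = U2 * (V2 * (T * (U1 * (V1 * (S * X))))) := by
    intro X
    calc T * (U1 * (V1 * (S * (U2 * (V2 * X)))))
        = T * (U1 * (S * (U2 * (Si * (V1 * (S * (V2 * X))))))) := by rw [h1]
      _ = U2 * (T * (U1 * (S * (Si * (V1 * (S * (V2 * X))))))) := by rw [h2]
      _ = U2 * (T * (U1 * (V1 * (S * (V2 * X))))) := by rw [cS]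
      _ = U2 * (T * (U1 * (Ti * (V2 * (T * (V1 * (S * X))))))) := by rw [h3]
      _ = U2 * (V2 * (T * (U1 * (V1 * (S * X))))) := by rw [h4]
  unfold ReflRel
  rw [leg1_mul, leg2_mul]
  have := key 1
  simp only [mul_one] at this
  calc mapA A (flip21 R) * (leg1 (u i) * leg1 (v i)) * mapA A R * (leg2 (u j) * leg2 (v j))
      = T * (U1 * (V1 * (S * (U2 * V2)))) := by simp only [mul_assoc]; rfl
    _ = U2 * (V2 * (T * (U1 * (V1 * S)))) := this
    _ = leg2 (u j) * leg2 (v j) * mapA A (flip21 R) * (leg1 (u i) * leg1 (v i)) * mapA A R := by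
        simp only [mul_assoc]; rfl
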